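/- Let B be an infinite Boolean algebra that is ℵ₁-saturated as a structure in the language of Boolean algebras. Then there is a countably infinite set A ⊆ B such that for every k ≥ 2 and every k-hypergraph E on A there is a set Y ⊆ B^k definable with parameters in B with: E(a₁,…,a_k) if and only if (a₁,…,a_k) ∈ Y, for all a₁,…,a_k ∈ A. (This is the key step showing that every infinite Boolean algebra is trace maximal.) -/

import Mathlib

open FirstOrder FirstOrder.Language

/-- `M` is `ℵ₁`-saturated: every countable finitely realized set of formulas in one free
variable with parameters from `M` is realized in `M`. -/
def Aleph1Saturated (L : Language) (M : Type*) [L.Structure M] : Prop :=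
  ∀ Sig : Set (L[[(Set.univ : Set M)]].Formula (Fin 1)), Sig.Countable →
    (∀ s : Finset (L[[(Set.univ : Set M)]].Formula (Fin 1)), ↑s ⊆ Sig →
      ∃ a : Fin 1 → M, ∀ φ ∈ s, Formula.Realize φ a) →
    ∃ a : Fin 1 → M, ∀ φ ∈ Sig, Formula.Realize φ a

/-- `E` is a `k`-hypergraph on the set `A`: a symmetric `k`-ary relation, supported on tuples
of pairwise distinct elements of `A`. -/
def IsHypergraphOn {V : Type*} (k : ℕ) (A : Set V) (E : (Fin k → V) → Prop) : Prop :=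
  (∀ a : Fin k → V, E a → ∀ i : Fin k, a i ∈ A) ∧
  (∀ a : Fin k → V, E a → Function.Injective a) ∧
  (∀ (σ : Equiv.Perm (Fin k)) (a : Fin k → V), E a → E (a ∘ σ))

/-- The function symbols of the first-order language of Boolean algebras. -/
inductive boolFunc : ℕ → Type
  | bot : boolFunc 0
  | top : boolFunc 0
  | compl : boolFunc 1
  | inf : boolFunc 2
  | sup : boolFunc 2

/-- The relation symbols of the first-order language of Boolean algebras. -/
inductive boolRel : ℕ → Type
  | le : boolRel 2

/-- The first-order language of Boolean algebras. -/
def boolLang : Language := ⟨boolFunc, boolRel⟩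

/-- A Boolean algebra as a first-order structure in the language of Boolean algebras. -/
instance (B : Type*) [BooleanAlgebra B] : boolLang.Structure B where
  funMap := fun {n} f x =>
    match n, f, x with
    | 0, .bot, _ => ⊥
    | 0, .top, _ => ⊤
    | 1, .compl, x => (x 0)ᶜ
    | 2, .inf, x => x 0 ⊓ x 1
    | 2, .sup, x => x 0 ⊔ x 1
  RelMap := fun {n} R x => match n, R with | 2, .le => x 0 ≤ x 1

section BA

variable {B : Type*} [BooleanAlgebra B] {α : Type*}

/-! ### Terms and atomic formulas -/

def tcon (b : B) : (boolLang[[(Set.univ : Set B)]]).Term α :=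
  ((boolLang.con (⟨b, trivial⟩ : (Set.univ : Set B))).term)

def tinf (t u : (boolLang[[(Set.univ : Set B)]]).Term α) :
    (boolLang[[(Set.univ : Set B)]]).Term α :=
  Term.func (Sum.inl boolFunc.inf) ![t, u]

def tbot : (boolLang[[(Set.univ : Set B)]]).Term α :=
  Term.func (Sum.inl boolFunc.bot) ![]

@[simp] lemma realize_tcon (b : B) (v : α → B) : (tcon b).realize v = b := by
  simp [tcon, Term.realize_con]

@[simp] lemma realize_tinf (t u : (boolLang[[(Set.univ : Set B)]]).Term α) (v : α → B) :
    (tinf t u).realize v = t.realize v ⊓ u.realize v := by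
  simp only [tinf, Term.realize_functions_apply₂]
  rfl

@[simp] lemma realize_tbot (v : α → B) : (tbot (B := B) (α := α)).realize v = ⊥ := rfl

/-! ### Simple constraints and the master saturation lemma -/

inductive BCon (B : Type*) where
  | ge (p : B)
  | disj (p : B)
  | meets (p : B)

def BCon.sem : BCon B → B → Prop
  | .ge p, v => p ≤ v
  | .disj p, v => v ⊓ p = ⊥
  | .meets p, v => v ⊓ p ≠ ⊥

def BCon.toFormula : BCon B → (boolLang[[(Set.univ : Set B)]]).Formula (Fin 1)
  | .ge p => Term.equal (tinf (tcon p) (Term.var 0)) (tcon p)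
  | .disj p => Term.equal (tinf (Term.var 0) (tcon p)) tbot
  | .meets p => (Term.equal (tinf (Term.var 0) (tcon p)) tbot).not

lemma BCon.realize_toFormula (c : BCon B) (v : Fin 1 → B) :
    c.toFormula.Realize v ↔ c.sem (v 0) := by
  cases c with
  | ge p => simp [toFormula, sem, Formula.realize_equal, inf_eq_left]
  | disj p => simp [toFormula, sem, Formula.realize_equal]
  | meets p => simp [toFormula, sem, Formula.realize_equal, Formula.realize_not]

lemma sat_master (hsat : Aleph1Saturated boolLang B) (f : ℕ → BCon B)
    (hfin : ∀ n : ℕ, ∃ v : B, ∀ i < n, (f i).sem v) : ∃ v : B, ∀ i, (f i).sem v := by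
  classical
  have hside : ∀ s : Finset ((boolLang[[(Set.univ : Set B)]]).Formula (Fin 1)),
      ↑s ⊆ Set.range (fun i => (f i).toFormula) →
      ∃ a : Fin 1 → B, ∀ φ ∈ s, Formula.Realize φ a := by
    intro s hs
    have hex : ∀ φ ∈ s, ∃ i, (f i).toFormula = φ := fun φ hφ => hs hφ
    choose g hg using hex
    obtain ⟨v, hv⟩ := hfin ((s.attach.sup fun x => g x.1 x.2) + 1)
    refine ⟨fun _ => v, fun φ hφ => ?_⟩
    rw [← hg φ hφ, BCon.realize_toFormula]
    exact hv _ (Nat.lt_succ_of_le (Finset.le_sup (f := fun x : {x // x ∈ s} => g x.1 x.2)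
      (Finset.mem_attach s ⟨φ, hφ⟩)))
  obtain ⟨a, ha⟩ := hsat (Set.range fun i => (f i).toFormula) (Set.countable_range _) hside
  exact ⟨a 0, fun i => (BCon.realize_toFormula _ _).1 (ha _ ⟨i, rfl⟩)⟩

/-! ### Largeness -/

def Large (x : B) : Prop := {y | y ≤ x}.Infinite

lemma Large.ne_bot {x : B} (h : Large x) : x ≠ ⊥ := by
  rintro rfl
  exact h (Set.Finite.subset (Set.finite_singleton ⊥) (by intro y hy; simpa using hy))

lemma Large.mono {x y : B} (h : Large x) (hxy : x ≤ y) : Large y :=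
  Set.Infinite.mono (s := {z | z ≤ x}) (fun z hz => le_trans hz hxy) h

lemma large_top [Infinite B] : Large (⊤ : B) := by
  have : {y : B | y ≤ ⊤} = Set.univ := by ext; simp
  rw [Large, this]
  exact Set.infinite_univ

lemma Large.split_step {x : B} (h : Large x) :
    ∃ z d : B, Large z ∧ d ≠ ⊥ ∧ z ≤ x ∧ d ≤ x ∧ z ⊓ d = ⊥ := by
  obtain ⟨z, hz, hznb⟩ : ∃ z, z ∈ {y | y ≤ x} ∧ z ∉ ({⊥, x} : Set B) := by
    obtain ⟨z, hz⟩ := (h.diff (Set.toFinite ({⊥, x} : Set B))).nonempty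
    exact ⟨z, hz.1, hz.2⟩
  simp only [Set.mem_insert_iff, Set.mem_singleton_iff, not_or] at hznb
  by_cases hzl : Large z
  · refine ⟨z, x \ z, hzl, ?_, hz, sdiff_le, inf_sdiff_self_right⟩
    intro hb
    exact hznb.2 (le_antisymm hz (sdiff_eq_bot_iff.1 hb))
  · have hlarge : Large (x \ z) := by
      by_contra hns
      apply h
      have himg : (fun y => (y ⊓ z, y \ z)) '' {y | y ≤ x} ⊆
          {y | y ≤ z} ×ˢ {y | y ≤ x \ z} := by
        rw [Set.image_subset_iff]
        intro y hy
        exact ⟨inf_le_right, sdiff_le_sdiff_right hy⟩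
      have hfin : ((fun y : B => (y ⊓ z, y \ z)) '' {y | y ≤ x}).Finite :=
        Set.Finite.subset (Set.Finite.prod (Set.not_infinite.1 hzl)
          (Set.not_infinite.1 hns)) himg
      refine Set.Finite.of_finite_image hfin ?_
      intro y₁ _ y₂ _ hEq
      have h1 : y₁ ⊓ z = y₂ ⊓ z := congrArg Prod.fst hEq
      have h2 : y₁ \ z = y₂ \ z := congrArg Prod.snd hEq
      calc y₁ = y₁ ⊓ z ⊔ y₁ \ z := (sup_inf_sdiff y₁ z).symm
        _ = y₂ ⊓ z ⊔ y₂ \ z := by rw [h1, h2]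
        _ = y₂ := sup_inf_sdiff y₂ z
    exact ⟨x \ z, z, hlarge, hznb.1, sdiff_le, hz, inf_sdiff_self_left⟩

lemma Large.antichain {x : B} (h : Large x) :
    ∃ d : ℕ → B, (∀ n, d n ≤ x) ∧ (∀ n, d n ≠ ⊥) ∧
      ∀ m n, m ≠ n → d m ⊓ d n = ⊥ := by
  classical
  have step : ∀ p : {y : B // Large y}, ∃ q : {y : B // Large y} × B,
      q.2 ≠ ⊥ ∧ q.1.1 ≤ p.1 ∧ q.2 ≤ p.1 ∧ q.1.1 ⊓ q.2 = ⊥ := by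
    rintro ⟨y, hy⟩
    obtain ⟨z, d, hz, hd, hzx, hdx, hzd⟩ := hy.split_step
    exact ⟨⟨⟨z, hz⟩, d⟩, hd, hzx, hdx, hzd⟩
  choose F hF1 hF2 hF3 hF4 using step
  let g : ℕ → {y : B // Large y} := fun n => Nat.rec ⟨x, h⟩ (fun _ p => (F p).1) n
  have hgsucc : ∀ n, (g (n + 1)).1 ≤ (g n).1 := fun n => hF2 (g n)
  have hgmono : ∀ m n, n ≤ m → (g m).1 ≤ (g n).1 := by
    intro m n hnm
    induction m with
    | zero => simp_all
    | succ m ih =>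
      rcases Nat.lt_or_ge n (m + 1) with hc | hc
      · exact le_trans (hgsucc m) (ih (Nat.lt_succ_iff.1 hc))
      · have : n = m + 1 := le_antisymm hnm hc
        subst this; exact le_rfl
  refine ⟨fun n => (F (g n)).2, fun n => le_trans (hF3 (g n)) (hgmono n 0 (Nat.zero_le n)),
    fun n => hF1 (g n), ?_⟩
  have key : ∀ m n, n < m → (F (g m)).2 ⊓ (F (g n)).2 = ⊥ := by
    intro m n hnm
    have h1 : (F (g m)).2 ≤ (g (n + 1)).1 := le_trans (hF3 (g m)) (hgmono m (n + 1) hnm)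
    have h2 : (g (n + 1)).1 ⊓ (F (g n)).2 = ⊥ := hF4 (g n)
    exact le_bot_iff.1 (le_trans (inf_le_inf_right _ h1) (le_of_eq h2))
  intro m n hmn
  rcases Nat.lt_or_ge n m with hc | hc
  · exact key m n hc
  · rw [inf_comm]; exact key n m (lt_of_le_of_ne hc hmn)

lemma Large.split (hsat : Aleph1Saturated boolLang B) {x : B} (h : Large x) :
    ∃ y : B, Large (x ⊓ y) ∧ Large (x ⊓ yᶜ) := by
  classical
  obtain ⟨d, hdx, hdnb, hdd⟩ := h.antichain
  have hfin : ∀ n : ℕ, ∃ v : B, ∀ i < n,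
      ((fun i => if Even i then BCon.ge (d i) else BCon.disj (d i)) i).sem v := by
    intro n
    refine ⟨(Finset.range n).sup (fun i => if Even i then d i else ⊥), fun i hi => ?_⟩
    by_cases hev : Even i
    · simp only [if_pos hev, BCon.sem]
      calc d i = (if Even i then d i else ⊥) := (if_pos hev).symm
        _ ≤ _ := Finset.le_sup (f := fun j => if Even j then d j else ⊥) (Finset.mem_range.2 hi)
    · simp only [if_neg hev, BCon.sem]
      rw [Finset.sup_inf_distrib_right]
      refine le_bot_iff.1 (Finset.sup_le fun j hj => ?_)
      by_cases hj2 : Even j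
      · rw [if_pos hj2]
        have hne : j ≠ i := fun hji => hev (hji ▸ hj2)
        exact le_of_eq (hdd j i hne)
      · rw [if_neg hj2, bot_inf_eq]
  obtain ⟨v, hv⟩ := sat_master hsat
    (fun i => if Even i then BCon.ge (d i) else BCon.disj (d i)) hfin
  · have hve : ∀ i, Even i → d i ≤ v := by
      intro i hi
      have := hv i
      rw [if_pos hi] at this
      exact this
    have hvo : ∀ i, ¬ Even i → v ⊓ d i = ⊥ := by
      intro i hi
      have := hv i
      rw [if_neg hi] at this
      exact this
    refine ⟨v, ?_, ?_⟩
    · have hinj : Function.Injective (fun i : ℕ => d (2 * i)) := by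
        intro i j hij
        by_contra hne
        have := hdd (2 * i) (2 * j) (by omega)
        simp only at hij
        rw [hij, inf_idem] at this
        exact hdnb _ this
      exact Set.infinite_of_injective_forall_mem hinj
        (fun i => le_inf (hdx _) (hve _ ⟨i, by ring⟩))
    · have hinj : Function.Injective (fun i : ℕ => d (2 * i + 1)) := by
        intro i j hij
        by_contra hne
        have := hdd (2 * i + 1) (2 * j + 1) (by omega)
        simp only at hij
        rw [hij, inf_idem] at this
        exact hdnb _ this
      refine Set.infinite_of_injective_forall_mem hinj (fun i => le_inf (hdx _) ?_)
      rw [le_compl_iff_disjoint_left, disjoint_iff]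
      exact hvo _ (by simp [Nat.even_add_one, parity_simps])

/-! ### Cells and independent families -/

def cellB (f : ℕ → B) (n : ℕ) (ε : ℕ → Bool) : B :=
  (Finset.range n).inf (fun j => if ε j then f j else (f j)ᶜ)

lemma cellB_zero (f : ℕ → B) (ε : ℕ → Bool) : cellB f 0 ε = ⊤ := by
  simp [cellB]

lemma cellB_succ (f : ℕ → B) (n : ℕ) (ε : ℕ → Bool) :
    cellB f (n + 1) ε = (if ε n then f n else (f n)ᶜ) ⊓ cellB f n ε := by
  rw [cellB, cellB, Finset.range_add_one, Finset.inf_insert]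

lemma cellB_congr_eps {f : ℕ → B} {n : ℕ} {ε δ : ℕ → Bool} (h : ∀ j < n, ε j = δ j) :
    cellB f n ε = cellB f n δ := by
  unfold cellB
  refine Finset.inf_congr rfl fun j hj => ?_
  rw [h j (Finset.mem_range.1 hj)]

lemma cellB_congr_fun {f g : ℕ → B} {n : ℕ} {ε : ℕ → Bool} (h : ∀ j < n, f j = g j) :
    cellB f n ε = cellB g n ε := by
  unfold cellB
  refine Finset.inf_congr rfl fun j hj => ?_
  rw [h j (Finset.mem_range.1 hj)]

lemma cellB_le_pos {f : ℕ → B} {n : ℕ} {ε : ℕ → Bool} {j : ℕ} (hj : j < n)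
    (hε : ε j = true) : cellB f n ε ≤ f j := by
  have := Finset.inf_le (f := fun j => if ε j then f j else (f j)ᶜ) (Finset.mem_range.2 hj)
  simpa [hε, cellB] using this

lemma cellB_le_neg {f : ℕ → B} {n : ℕ} {ε : ℕ → Bool} {j : ℕ} (hj : j < n)
    (hε : ε j = false) : cellB f n ε ≤ (f j)ᶜ := by
  have := Finset.inf_le (f := fun j => if ε j then f j else (f j)ᶜ) (Finset.mem_range.2 hj)
  simpa [hε, cellB] using this

lemma cellB_disjoint {f : ℕ → B} {n : ℕ} {ε δ : ℕ → Bool} {j : ℕ} (hj : j < n)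
    (hεδ : ε j ≠ δ j) : cellB f n ε ⊓ cellB f n δ = ⊥ := by
  have h1 : ∀ ε δ : ℕ → Bool, ε j = true → δ j = false →
      cellB f n ε ⊓ cellB f n δ = ⊥ := by
    intro ε δ hε hδ
    refine le_bot_iff.1 (le_trans (inf_le_inf (cellB_le_pos hj hε) (cellB_le_neg hj hδ)) ?_)
    rw [inf_compl_eq_bot]
  cases hε : ε j <;> cases hδ : δ j
  · exact absurd (hε.trans hδ.symm) hεδ
  · rw [inf_comm]; exact h1 δ ε hδ hε
  · exact h1 ε δ hε hδ
  · exact absurd (hε.trans hδ.symm) hεδ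

lemma extend_step (hsat : Aleph1Saturated boolLang B) (f : ℕ → B) (n : ℕ)
    (h : ∀ ε : ℕ → Bool, Large (cellB f n ε)) :
    ∃ b : B, ∀ ε : ℕ → Bool, Large (cellB f n ε ⊓ (if ε n then b else bᶜ)) := by
  classical
  let cl : Finset ℕ → B := fun s => cellB f n (fun j => decide (j ∈ s))
  have hcl : ∀ s : Finset ℕ, Large (cl s) := fun s => h _
  let vv : Finset ℕ → B := fun s => Classical.choose ((hcl s).split hsat)
  have hvv : ∀ s, Large (cl s ⊓ vv s) ∧ Large (cl s ⊓ (vv s)ᶜ) :=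
    fun s => Classical.choose_spec ((hcl s).split hsat)
  refine ⟨((Finset.range n).powerset).sup (fun s => cl s ⊓ vv s), fun ε => ?_⟩
  set s : Finset ℕ := (Finset.range n).filter (fun j => ε j = true) with hs
  have hsp : s ∈ (Finset.range n).powerset := Finset.mem_powerset.2 (Finset.filter_subset _ _)
  have hcell : cellB f n ε = cl s := by
    refine cellB_congr_eps fun j hj => ?_
    simp [hs, Finset.mem_filter, Finset.mem_range, hj]
  rcases Bool.eq_false_or_eq_true (ε n) with hen | hen
  · -- positive side
    rw [hcell, if_pos (by simp [hen])]
    exact Large.mono (hvv s).1 (le_inf inf_le_left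
      (Finset.le_sup (f := fun t => cl t ⊓ vv t) hsp))
  · -- complement side
    rw [hcell, if_neg (by simp [hen])]
    refine Large.mono (hvv s).2 (le_inf inf_le_left ?_)
    rw [le_compl_iff_disjoint_right, disjoint_iff, Finset.sup_inf_distrib_left]
    refine le_bot_iff.1 (Finset.sup_le fun t ht => ?_)
    by_cases hts : t = s
    · rw [hts]
      calc cl s ⊓ (vv s)ᶜ ⊓ (cl s ⊓ vv s) ≤ (vv s)ᶜ ⊓ vv s :=
            inf_le_inf inf_le_right inf_le_right
        _ = ⊥ := compl_inf_eq_bot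
    · obtain ⟨j, hjr, hjd⟩ : ∃ j, j < n ∧ (decide (j ∈ t) ≠ decide (j ∈ s)) := by
        by_contra hc
        push_neg at hc
        apply hts
        ext j
        by_cases hjn : j < n
        · have := hc j hjn
          simp only [decide_eq_decide] at this
          exact this
        · constructor
          · intro hjt
            exact absurd (Finset.mem_range.1 (Finset.mem_powerset.1 ht hjt)) hjn
          · intro hjs
            exact absurd (Finset.mem_range.1 (Finset.mem_powerset.1 hsp hjs)) hjn
      have hd0 : cl s ⊓ cl t = ⊥ := cellB_disjoint hjr (fun hc => hjd hc.symm)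
      calc cl s ⊓ (vv s)ᶜ ⊓ (cl t ⊓ vv t) ≤ cl s ⊓ cl t :=
            inf_le_inf inf_le_left inf_le_left
        _ = ⊥ := hd0

noncomputable def indSeq (hsat : Aleph1Saturated boolLang B) [Infinite B] :
    (n : ℕ) → {f : ℕ → B // ∀ ε : ℕ → Bool, Large (cellB f n ε)} :=
  Nat.rec
    ⟨fun _ => ⊥, fun ε => by rw [cellB_zero]; exact large_top⟩
    (fun n p =>
      ⟨Function.update p.1 n (Classical.choose (extend_step hsat p.1 n p.2)), by
        intro ε
        have hspec := Classical.choose_spec (extend_step hsat p.1 n p.2) ε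
        have h1 : cellB (Function.update p.1 n
              (Classical.choose (extend_step hsat p.1 n p.2))) (n + 1) ε
            = (if ε n then Classical.choose (extend_step hsat p.1 n p.2)
                else (Classical.choose (extend_step hsat p.1 n p.2))ᶜ) ⊓ cellB p.1 n ε := by
          rw [cellB_succ]
          congr 1
          · simp [Function.update_self]
          · exact cellB_congr_fun fun j hj => Function.update_of_ne (Nat.ne_of_lt hj) _ _
        rw [h1, _root_.inf_comm]
        exact hspec⟩)

variable [Infinite B]

noncomputable def indFam (hsat : Aleph1Saturated boolLang B) : ℕ → B :=
  fun i => (indSeq hsat (i + 1)).1 i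

lemma indSeq_agree (hsat : Aleph1Saturated boolLang B) :
    ∀ m i, i < m → (indSeq hsat m).1 i = indFam hsat i := by
  intro m
  induction m with
  | zero => intro i hi; omega
  | succ m ih =>
    intro i hi
    rcases Nat.lt_or_ge i m with hc | hc
    · have h1 : (indSeq hsat (m + 1)).1 i = (indSeq hsat m).1 i :=
        Function.update_of_ne (Nat.ne_of_lt hc) _ _
      rw [h1, ih i hc]
    · have : i = m := by omega
      subst this
      rfl

lemma indFam_cells_large (hsat : Aleph1Saturated boolLang B) (n : ℕ) (ε : ℕ → Bool) :
    Large (cellB (indFam hsat) n ε) := by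
  have h := (indSeq hsat n).2 ε
  rwa [cellB_congr_fun (fun j hj => indSeq_agree hsat n j hj)] at h

lemma indFam_injective (hsat : Aleph1Saturated boolLang B) :
    Function.Injective (indFam hsat) := by
  intro i j hij
  by_contra hne
  have hlarge := indFam_cells_large hsat (max i j + 1) (fun t => decide (t = i))
  have h1 : cellB (indFam hsat) (max i j + 1) (fun t => decide (t = i)) ≤ indFam hsat i :=
    cellB_le_pos (by omega) (by simp)
  have h2 : cellB (indFam hsat) (max i j + 1) (fun t => decide (t = i)) ≤ (indFam hsat j)ᶜ :=
    cellB_le_neg (by omega) (by simp [hne]; exact fun h => hne h.symm)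
  rw [hij] at h1
  have : cellB (indFam hsat) (max i j + 1) (fun t => decide (t = i)) = ⊥ :=
    le_bot_iff.1 (by
      have := le_inf h1 h2
      rwa [inf_compl_eq_bot] at this)
  exact hlarge.ne_bot this

/-! ### The k-ary trace formula -/

def meetTerm (k : ℕ) (c : B) : (boolLang[[(Set.univ : Set B)]]).Term (Fin k) :=
  (List.finRange k).foldr (fun i t => tinf (Term.var i) t) (tcon c)

lemma realize_foldr_tinf (l : List (Fin k)) (t0 : (boolLang[[(Set.univ : Set B)]]).Term (Fin k))
    (x : Fin k → B) :
    ((l.foldr (fun i t => tinf (Term.var i) t) t0).realize x)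
      = l.foldr (fun i b => x i ⊓ b) (t0.realize x) := by
  induction l with
  | nil => rfl
  | cons i l ih => simp [List.foldr_cons, realize_tinf, Term.realize_var, ih]

lemma foldr_inf_eq (l : List (Fin k)) (x : Fin k → B) (c : B) :
    l.foldr (fun i b => x i ⊓ b) c = l.toFinset.inf x ⊓ c := by
  classical
  induction l with
  | nil => simp
  | cons i l ih => rw [List.foldr_cons, ih, List.toFinset_cons, Finset.inf_insert, inf_assoc]

lemma realize_meetTerm (k : ℕ) (c : B) (x : Fin k → B) :
    (meetTerm k c).realize x = Finset.univ.inf x ⊓ c := by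
  rw [meetTerm, realize_foldr_tinf, realize_tcon, foldr_inf_eq, List.toFinset_finRange]

noncomputable def hypForm (k : ℕ) (c : B) : (boolLang[[(Set.univ : Set B)]]).Formula (Fin k) :=
  (Term.equal (meetTerm k c) tbot).not ⊓
    BoundedFormula.iInf (fun p : Fin k × Fin k =>
      if p.1 = p.2 then ⊤ else (Term.equal (Term.var p.1) (Term.var p.2)).not)

lemma realize_hypForm (k : ℕ) (c : B) (x : Fin k → B) :
    (hypForm k c).Realize x ↔ (Finset.univ.inf x ⊓ c ≠ ⊥ ∧ Function.Injective x) := by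
  rw [hypForm, Formula.realize_inf]
  constructor
  · rintro ⟨h1, h2⟩
    refine ⟨?_, ?_⟩
    · rw [Formula.realize_not, Formula.realize_equal, realize_meetTerm] at h1
      simpa using h1
    · intro i j hij
      by_contra hne
      have h3 := BoundedFormula.realize_iInf.1 h2 (i, j)
      rw [if_neg hne] at h3
      rw [BoundedFormula.realize_not] at h3
      apply h3
      have : Formula.Realize (L := boolLang[[(Set.univ : Set B)]])
          (Term.equal (Term.var i) (Term.var j)) x := by
        rw [Formula.realize_equal]
        simpa using hij
      exact this
  · rintro ⟨h1, h2⟩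
    constructor
    · rw [Formula.realize_not, Formula.realize_equal, realize_meetTerm]
      simpa using h1
    · refine BoundedFormula.realize_iInf.2 fun p => ?_
      by_cases hp : p.1 = p.2
      · rw [if_pos hp]
        exact BoundedFormula.realize_top.2 trivial
      · rw [if_neg hp, BoundedFormula.realize_not]
        intro hcon
        have : Formula.Realize (L := boolLang[[(Set.univ : Set B)]])
            (Term.equal (Term.var p.1) (Term.var p.2)) x := hcon
        rw [Formula.realize_equal] at this
        simp only [Term.realize_var] at this
        exact hp (h2 this)

end BA

/-- In an infinite `ℵ₁`-saturated Boolean algebra there is a countably infinite set `A` such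
that every hypergraph on `A` is traced by a definable set.  (This is the key step in showing
that every infinite Boolean algebra is trace maximal.) -/
theorem boolean_algebra_codes_all_hypergraphs
    (B : Type*) [BooleanAlgebra B] [Infinite B]
    (hsat : Aleph1Saturated boolLang B) :
    ∃ A : Set B, A.Countable ∧ A.Infinite ∧
      ∀ (k : ℕ), 2 ≤ k → ∀ E : (Fin k → B) → Prop, IsHypergraphOn k A E →
        ∃ Y : Set (Fin k → B), Set.Definable (Set.univ : Set B) boolLang Y ∧
          ∀ a : Fin k → B, (∀ i, a i ∈ A) → (E a ↔ a ∈ Y) := by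
  classical
  set a := indFam hsat with ha
  refine ⟨Set.range a, Set.countable_range _,
    Set.infinite_range_of_injective (indFam_injective hsat), ?_⟩
  intro k _hk E hE
  let Edge : Finset ℕ → Prop := fun s =>
    ∃ g : Fin k → ℕ, Function.Injective g ∧ (∀ i, g i ∈ s) ∧ E (a ∘ g)
  have hNE : Nonempty {s : Finset ℕ // s.card = k} := ⟨⟨Finset.range k, Finset.card_range k⟩⟩
  obtain ⟨e, he⟩ := exists_surjective_nat {s : Finset ℕ // s.card = k}
  let con : ℕ → BCon B := fun m =>
    if Edge (e m).1 then BCon.meets ((e m).1.inf a) else BCon.disj ((e m).1.inf a)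
  have hfin : ∀ n, ∃ v, ∀ i < n, (con i).sem v := by
    intro n
    set N := (((Finset.range n).biUnion (fun i => (e i).1)).sup id) + 1 with hN
    have hNe : ∀ i < n, ∀ j ∈ (e i).1, j < N := by
      intro i hi j hj
      exact Nat.lt_succ_of_le (Finset.le_sup (f := id)
        (Finset.mem_biUnion.2 ⟨i, Finset.mem_range.2 hi, hj⟩))
    refine ⟨(Finset.range n).sup (fun m =>
      if Edge (e m).1 then cellB a N (fun j => decide (j ∈ (e m).1)) else ⊥), fun i hi => ?_⟩
    by_cases hEd : Edge (e i).1
    · simp only [con, if_pos hEd, BCon.sem]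
      intro hbot
      have hcell_le : cellB a N (fun j => decide (j ∈ (e i).1)) ≤ (e i).1.inf a :=
        Finset.le_inf fun j hj => cellB_le_pos (hNe i hi j hj) (by simp [hj])
      have hle : cellB a N (fun j => decide (j ∈ (e i).1)) ≤
          (Finset.range n).sup (fun m =>
            if Edge (e m).1 then cellB a N (fun j => decide (j ∈ (e m).1)) else ⊥) := by
        calc cellB a N (fun j => decide (j ∈ (e i).1))
            = (if Edge (e i).1 then cellB a N (fun j => decide (j ∈ (e i).1)) else ⊥) :=
              (if_pos hEd).symm
          _ ≤ _ := Finset.le_sup (f := fun m =>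
              if Edge (e m).1 then cellB a N (fun j => decide (j ∈ (e m).1)) else ⊥)
              (Finset.mem_range.2 hi)
      have : cellB a N (fun j => decide (j ∈ (e i).1)) = ⊥ :=
        le_bot_iff.1 (by rw [← hbot]; exact le_inf hle hcell_le)
      exact (indFam_cells_large hsat N _).ne_bot this
    · simp only [con, if_neg hEd, BCon.sem]
      rw [Finset.sup_inf_distrib_right]
      refine le_bot_iff.1 (Finset.sup_le fun m _ => ?_)
      by_cases hEm : Edge (e m).1
      · rw [if_pos hEm]
        have hne : (e m).1 ≠ (e i).1 := fun hh => hEd (hh ▸ hEm)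
        obtain ⟨j, hji, hjm⟩ : ∃ j, j ∈ (e i).1 ∧ j ∉ (e m).1 := by
          by_contra hcon
          push_neg at hcon
          exact hne (Finset.eq_of_subset_of_card_le hcon
            (le_of_eq ((e m).2.trans (e i).2.symm))).symm
        have h1 : cellB a N (fun j => decide (j ∈ (e m).1)) ≤ (a j)ᶜ :=
          cellB_le_neg (hNe i hi j hji) (by simp [hjm])
        have h2 : (e i).1.inf a ≤ a j := Finset.inf_le hji
        calc cellB a N (fun j => decide (j ∈ (e m).1)) ⊓ (e i).1.inf a
            ≤ (a j)ᶜ ⊓ a j := inf_le_inf h1 h2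
          _ = ⊥ := compl_inf_eq_bot
      · rw [if_neg hEm, bot_inf_eq]
  obtain ⟨c, hc⟩ := sat_master hsat con hfin
  have hcs : ∀ s : Finset ℕ, s.card = k →
      (Edge s → c ⊓ s.inf a ≠ ⊥) ∧ (¬ Edge s → c ⊓ s.inf a = ⊥) := by
    intro s hsk
    obtain ⟨m, hm⟩ := he ⟨s, hsk⟩
    have hms : (e m).1 = s := by rw [hm]
    constructor
    · intro hEd
      have := hc m
      simp only [con, hms, if_pos hEd, BCon.sem] at this
      exact this
    · intro hEd
      have := hc m
      simp only [con, hms, if_neg hEd, BCon.sem] at this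
      exact this
  refine ⟨{x | (hypForm k c).Realize x}, ⟨hypForm k c, rfl⟩, ?_⟩
  intro x hx
  choose g hg using hx
  have hax : a ∘ g = x := funext hg
  rw [Set.mem_setOf_eq, realize_hypForm]
  have hinfeq : ∀ (h : Function.Injective g),
      (Finset.univ.image g).inf a = Finset.univ.inf x := by
    intro _
    rw [Finset.inf_image]
    exact Finset.inf_congr rfl (fun i _ => hg i)
  constructor
  · intro hEx
    have hinj : Function.Injective x := hE.2.1 x hEx
    have hginj : Function.Injective g := fun i j hij => hinj (by rw [← hg i, ← hg j, hij])
    have hsk : (Finset.univ.image g).card = k := by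
      rw [Finset.card_image_of_injective _ hginj, Finset.card_univ, Fintype.card_fin]
    have hEdge : Edge (Finset.univ.image g) :=
      ⟨g, hginj, fun i => Finset.mem_image_of_mem g (Finset.mem_univ i), by rw [hax]; exact hEx⟩
    have hne := (hcs _ hsk).1 hEdge
    refine ⟨?_, hinj⟩
    rw [← hinfeq hginj]
    intro hbot
    exact hne (by rw [inf_comm]; exact hbot)
  · rintro ⟨hne, hinj⟩
    have hginj : Function.Injective g := fun i j hij => hinj (by rw [← hg i, ← hg j, hij])
    have hsk : (Finset.univ.image g).card = k := by
      rw [Finset.card_image_of_injective _ hginj, Finset.card_univ, Fintype.card_fin]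
    have hEdge : Edge (Finset.univ.image g) := by
      by_contra hnE
      have := (hcs _ hsk).2 hnE
      rw [hinfeq hginj, inf_comm] at this
      exact hne this
    obtain ⟨g', hg'inj, hg's, hEg'⟩ := hEdge
    have himg : Finset.univ.image g' = Finset.univ.image g := by
      refine Finset.eq_of_subset_of_card_le ?_ ?_
      · intro j hj
        obtain ⟨i, _, rfl⟩ := Finset.mem_image.1 hj
        exact hg's i
      · rw [hsk, Finset.card_image_of_injective _ hg'inj, Finset.card_univ, Fintype.card_fin]
    have hex2 : ∀ i, ∃ j, g' j = g i := by
      intro i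
      have : g i ∈ Finset.univ.image g' := by
        rw [himg]; exact Finset.mem_image_of_mem g (Finset.mem_univ i)
      obtain ⟨j, _, hj⟩ := Finset.mem_image.1 this
      exact ⟨j, hj⟩
    choose σ hσ using hex2
    have hσinj : Function.Injective σ := fun i j hij => hginj (by rw [← hσ i, ← hσ j, hij])
    have hσbij := Finite.injective_iff_bijective.1 hσinj
    have hperm := hE.2.2 (Equiv.ofBijective σ hσbij) (a ∘ g') hEg'
    have hxeq : (a ∘ g') ∘ (Equiv.ofBijective σ hσbij) = x := by
      funext i
      show a (g' (σ i)) = x i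
      rw [hσ i, hg i]
    rwa [hxeq] at hperm
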